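/- The number of tuples (v_1,...,v_b) with each v_i in {1,...,m} (m = 2·3^{b-1}) satisfying the admissibility congruence 2^{Σv_i} ≡ Σ_{i=1}^{b-1} 2^{Σ_{j>i} v_j}·3^{i-1} + 3^{b-1} (mod 3^b) equals m^{b-1} = 2^{b-1}·3^{(b-1)^2}. -/

import Mathlib

open Finset

private lemma two_pow_not_dvd (t : ℕ) : ¬ (3 ∣ 2 ^ t) := fun h => by
  have := Nat.Prime.dvd_of_dvd_pow Nat.prime_three h; omega

private lemma four_pow_aux (k : ℕ) : ∃ t : ℕ, 4 ^ (3 ^ k) = 1 + 3 ^ (k+1) + 3 ^ (k+2) * t := by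
  induction k with
  | zero => exact ⟨0, by norm_num⟩
  | succ k ih =>
    obtain ⟨t, ht⟩ := ih
    refine ⟨t + 3 ^ k * (1 + 3*t)^2 + 3 ^ k * 3 ^ k * (1 + 3*t)^3, ?_⟩
    have h1 : (4:ℕ) ^ 3 ^ (k+1) = (4 ^ 3 ^ k) ^ 3 := by
      rw [pow_succ, pow_mul]
    rw [h1, ht]
    have e1 : (3:ℕ) ^ (k+1) = 3 * 3 ^ k := by ring
    have e2 : (3:ℕ) ^ (k+2) = 9 * 3 ^ k := by ring
    have e3 : (3:ℕ) ^ (k+3) = 27 * 3 ^ k := by ring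
    rw [e1, e2, e3]
    ring

private lemma h2cop (n : ℕ) : Nat.Coprime 2 (3 ^ (n+1)) :=
  Nat.Coprime.pow_right _ (by norm_num)

private lemma order_two (n : ℕ) :
    haveI : NeZero (3 ^ (n+1)) := ⟨by positivity⟩
    orderOf (ZMod.unitOfCoprime 2 (h2cop n)) = 2 * 3 ^ n := by
  haveI : NeZero (3 ^ (n+1)) := ⟨by positivity⟩
  set N := 3 ^ (n+1) with hN
  set u := ZMod.unitOfCoprime 2 (h2cop n) with hu
  have hval : (u : ZMod N) = ((2:ℕ) : ZMod N) := ZMod.coe_unitOfCoprime 2 (h2cop n)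
  have hcard : Fintype.card (ZMod N)ˣ = 2 * 3 ^ n := by
    rw [ZMod.card_units_eq_totient, hN,
      Nat.totient_prime_pow Nat.prime_three (Nat.succ_pos n)]
    simp [mul_comm]
  apply orderOf_eq_of_pow_and_pow_div_prime (by positivity)
  · rw [← hcard]; exact pow_card_eq_one
  · intro p hp hpd
    have hp23 : p = 2 ∨ p = 3 := by
      rcases (Nat.Prime.dvd_mul hp).mp hpd with h | h
      · left; exact (Nat.prime_dvd_prime_iff_eq hp Nat.prime_two).mp h
      · right; exact (Nat.prime_dvd_prime_iff_eq hp Nat.prime_three).mp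
          (hp.dvd_of_dvd_pow h)
    rcases hp23 with rfl | rfl
    · -- p = 2 : show u ^ 3^n ≠ 1
      have hq : 2 * 3 ^ n / 2 = 3 ^ n := by omega
      rw [hq]
      intro h
      have hv : ((2:ℕ) : ZMod N) ^ (3 ^ n) = 1 := by
        rw [← hval, ← Units.val_pow_eq_pow_val, h, Units.val_one]
      have h3 : (3:ℕ) ∣ N := by
        rw [hN]; exact dvd_pow_self 3 n.succ_ne_zero
      have hv3 : ((2:ℕ) : ZMod 3) ^ (3 ^ n) = 1 := by
        have := congrArg (ZMod.castHom h3 (ZMod 3)) hv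
        rw [map_pow, map_natCast, map_one] at this
        exact this
      have h2 : ((2:ℕ) : ZMod 3) = -1 := by decide
      rw [h2, Odd.neg_one_pow (Odd.pow (by decide))] at hv3
      exact absurd hv3 (by decide)
    · -- p = 3 : need n = s+1
      have hn : n ≠ 0 := by
        rintro rfl; simp at hpd
      obtain ⟨s, rfl⟩ : ∃ s, n = s + 1 := ⟨n - 1, by omega⟩
      have hq : 2 * 3 ^ (s+1) / 3 = 2 * 3 ^ s := by
        rw [show 2 * 3 ^ (s+1) = 2 * 3 ^ s * 3 by ring, Nat.mul_div_cancel _ (by norm_num)]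
      rw [hq]
      intro h
      obtain ⟨t, ht⟩ := four_pow_aux s
      have hv : ((2:ℕ) : ZMod N) ^ (2 * 3 ^ s) = 1 := by
        rw [← hval, ← Units.val_pow_eq_pow_val, h, Units.val_one]
      have h4 : ((2:ℕ) : ZMod N) ^ (2 * 3 ^ s) = ((4 ^ 3 ^ s : ℕ) : ZMod N) := by
        push_cast
        rw [pow_mul]
        norm_num
      rw [h4, ht, show (1 : ZMod N) = ((1:ℕ) : ZMod N) by norm_num,
        ZMod.natCast_eq_natCast_iff] at hv
      have hd : N ∣ (1 + 3 ^ (s+1) + 3 ^ (s+2) * t) - 1 :=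
        (Nat.modEq_iff_dvd' (by omega)).mp hv.symm
      have hd2 : N ∣ 3 ^ (s+2) * t + 3 ^ (s+1) := by
        have : (1 + 3 ^ (s+1) + 3 ^ (s+2) * t) - 1 = 3 ^ (s+2) * t + 3 ^ (s+1) := by omega
        rwa [this] at hd
      have hs2 : s + 1 + 1 = s + 2 := rfl
      have hNd : N ∣ 3 ^ (s+2) * t := by
        rw [hN, hs2]; exact dvd_mul_right _ _
      have hd3 : N ∣ 3 ^ (s+1) := (Nat.dvd_add_right hNd).mp hd2
      have hle := Nat.le_of_dvd (by positivity) hd3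
      rw [hN, hs2] at hle
      have h32 : (3:ℕ) ^ (s+1) < 3 ^ (s+2) :=
        Nat.pow_lt_pow_right (by norm_num) (by omega)
      omega

private lemma key_unique (n : ℕ) (a c : ℕ) (ha : ¬ 3 ∣ a) (hc : ¬ 3 ∣ c) :
    ∃! x : ℕ, x ∈ Finset.Icc 1 (2 * 3 ^ n) ∧ 2 ^ x * a ≡ c [MOD 3 ^ (n+1)] := by
  haveI : NeZero (3 ^ (n+1)) := ⟨by positivity⟩
  set N := 3 ^ (n+1) with hN
  set m := 2 * 3 ^ n with hmdef
  have hm : 0 < m := by positivity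
  have hacop : Nat.Coprime a N :=
    Nat.Coprime.pow_right _ ((Nat.Prime.coprime_iff_not_dvd Nat.prime_three).mpr ha).symm
  have hccop : Nat.Coprime c N :=
    Nat.Coprime.pow_right _ ((Nat.Prime.coprime_iff_not_dvd Nat.prime_three).mpr hc).symm
  set u := ZMod.unitOfCoprime 2 (h2cop n) with hu
  set A := ZMod.unitOfCoprime a hacop with hA
  set C := ZMod.unitOfCoprime c hccop with hC
  have hord : orderOf u = m := order_two n
  have hcard : Nat.card (ZMod N)ˣ = m := by
    rw [Nat.card_eq_fintype_card, ZMod.card_units_eq_totient, hN,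
      Nat.totient_prime_pow Nat.prime_three (Nat.succ_pos n)]
    simp [hmdef, mul_comm]
  have htop : Subgroup.zpowers u = ⊤ := by
    apply Subgroup.eq_top_of_card_eq
    rw [Nat.card_zpowers, hord, hcard]
  have hmem : C * A⁻¹ ∈ Subgroup.zpowers u := by rw [htop]; exact Subgroup.mem_top _
  obtain ⟨k, hk⟩ := Subgroup.mem_zpowers_iff.mp hmem
  set n₀ := (k % (m : ℤ)).toNat with hn₀def
  have hmn : 0 ≤ k % (m:ℤ) := Int.emod_nonneg k (by exact_mod_cast hm.ne')
  have hlt : k % (m:ℤ) < m := Int.emod_lt_of_pos k (by exact_mod_cast hm)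
  have hn₀lt : n₀ < m := by omega
  have hun : u ^ n₀ = C * A⁻¹ := by
    have h := zpow_mod_orderOf u k
    rw [hord] at h
    rw [← hk, ← h, ← zpow_natCast, hn₀def, Int.toNat_of_nonneg hmn]
  have hvu : (u : ZMod N) = 2 := by
    have := ZMod.coe_unitOfCoprime 2 (h2cop n); push_cast at this; exact this
  have hvA : (A : ZMod N) = (a : ZMod N) := ZMod.coe_unitOfCoprime a hacop
  have hvC : (C : ZMod N) = (c : ZMod N) := ZMod.coe_unitOfCoprime c hccop
  have hiff : ∀ x : ℕ, (2 ^ x * a ≡ c [MOD N]) ↔ x ≡ n₀ [MOD m] := by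
    intro x
    rw [← ZMod.natCast_eq_natCast_iff]
    push_cast
    rw [← hvu, ← hvA, ← hvC, ← Units.val_pow_eq_pow_val, ← Units.val_mul, ← Units.ext_iff,
      ← eq_mul_inv_iff_mul_eq, ← hun, pow_eq_pow_iff_modEq, hord]
  refine ⟨if n₀ = 0 then m else n₀, ⟨?_, ?_⟩, ?_⟩
  · rw [Finset.mem_Icc]; split_ifs with h <;> omega
  · rw [hiff]
    split_ifs with h
    · rw [h]; exact Nat.modEq_zero_iff_dvd.mpr dvd_rfl
    · rfl
  · rintro y ⟨hy, hcong⟩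
    rw [hiff] at hcong
    rw [Finset.mem_Icc] at hy
    have h1 : y % m = n₀ % m := hcong
    rw [Nat.mod_eq_of_lt hn₀lt] at h1
    have hy2 : y = m ∨ y < m := by omega
    rcases hy2 with rfl | h
    · rw [Nat.mod_self] at h1
      rw [if_pos h1.symm]
    · rw [Nat.mod_eq_of_lt h] at h1
      rw [if_neg (by omega)]
      exact h1

private def Cfun (n : ℕ) (w : Fin n → ℕ) : ℕ :=
  (∑ k ∈ Finset.range n,
      2 ^ (∑ i ∈ Finset.univ.filter fun i : Fin n => k ≤ (i : ℕ), w i) * 3 ^ k) + 3 ^ n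

private lemma Cfun_not_dvd (n : ℕ) (w : Fin n → ℕ) : ¬ 3 ∣ Cfun n w := by
  cases n with
  | zero => simp [Cfun]
  | succ s =>
    unfold Cfun
    rw [Finset.sum_range_succ']
    simp only [pow_zero, mul_one]
    intro hC
    rw [add_right_comm] at hC
    have ht := (Nat.dvd_add_right
      (Dvd.dvd.add
        (Finset.dvd_sum fun k _ => Dvd.dvd.mul_left (dvd_pow_self 3 k.succ_ne_zero) _)
        (dvd_pow_self 3 s.succ_ne_zero))).mp hC
    exact two_pow_not_dvd _ ht

private lemma tail_sum (n k : ℕ) (v : Fin (n+1) → ℕ) :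
    (∑ j ∈ Finset.univ.filter fun j : Fin (n+1) => k + 1 ≤ (j : ℕ), v j)
      = ∑ i ∈ Finset.univ.filter fun i : Fin n => k ≤ (i : ℕ), v i.succ := by
  rw [Finset.sum_filter, Finset.sum_filter, Fin.sum_univ_succ]
  simp [Fin.val_succ, Nat.succ_le_succ_iff]

open Finset in
theorem stmt3 (b : ℕ) (hb : 1 ≤ b) (m : ℕ) (hm : m = 2 * 3 ^ (b - 1)) :
    ((Fintype.piFinset fun _ : Fin b => Finset.Icc 1 m).filter fun v : Fin b → ℕ =>
        2 ^ (∑ i, v i) ≡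
          (∑ k ∈ Finset.range (b - 1),
              2 ^ (∑ j ∈ Finset.univ.filter fun j : Fin b => k + 1 ≤ (j : ℕ), v j) * 3 ^ k) +
            3 ^ (b - 1) [MOD 3 ^ b]).card = m ^ (b - 1) := by
  subst hm
  obtain ⟨n, rfl⟩ : ∃ n, b = n + 1 := ⟨b - 1, by omega⟩
  simp only [Nat.add_sub_cancel]
  have hPiff : ∀ v : Fin (n+1) → ℕ,
      (2 ^ (∑ i, v i) ≡
          (∑ k ∈ Finset.range n,
              2 ^ (∑ j ∈ Finset.univ.filter fun j : Fin (n+1) => k + 1 ≤ (j : ℕ), v j) * 3 ^ k) +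
            3 ^ n [MOD 3 ^ (n+1)])
        ↔ 2 ^ (v 0) * 2 ^ (∑ i : Fin n, v i.succ) ≡ Cfun n (fun i => v i.succ)
            [MOD 3 ^ (n+1)] := by
    intro v
    unfold Cfun
    rw [Fin.sum_univ_succ, pow_add 2 (v 0) (∑ i : Fin n, v i.succ)]
    simp only [tail_sum]
  have hIcc : (2 * 3 ^ n : ℕ) = (Finset.Icc 1 (2 * 3 ^ n)).card := by
    rw [Nat.card_Icc]; omega
  rw [show (2 * 3 ^ n : ℕ) ^ n = ((Fintype.piFinset fun _ : Fin n => Finset.Icc 1 (2 * 3 ^ n)).card) by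
    rw [Fintype.card_piFinset_const]; rw [← hIcc]]
  apply Finset.card_bij (fun v _ => fun i : Fin n => v i.succ)
  · intro v hv
    simp only [Finset.mem_filter, Fintype.mem_piFinset] at hv
    rw [Fintype.mem_piFinset]
    exact fun i => hv.1 i.succ
  · intro v1 h1 v2 h2 heq
    simp only [Finset.mem_filter, Fintype.mem_piFinset] at h1 h2
    have hp1 := (hPiff v1).mp h1.2
    have hp2 := (hPiff v2).mp h2.2
    have hsum : (∑ i : Fin n, v2 i.succ) = ∑ i : Fin n, v1 i.succ :=
      Finset.sum_congr rfl fun i _ => (congrFun heq i).symm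
    have hCeq : Cfun n (fun i => v2 i.succ) = Cfun n (fun i => v1 i.succ) := by rw [heq]
    rw [hsum, hCeq] at hp2
    obtain ⟨x, -, huniq⟩ := key_unique n (2 ^ (∑ i : Fin n, v1 i.succ))
      (Cfun n (fun i => v1 i.succ)) (two_pow_not_dvd _) (Cfun_not_dvd _ _)
    have e1 := huniq (v1 0) ⟨h1.1 0, hp1⟩
    have e2 := huniq (v2 0) ⟨h2.1 0, hp2⟩
    have h0 : v1 0 = v2 0 := by rw [e1, e2]
    funext i
    refine Fin.cases ?_ ?_ i
    · exact h0
    · exact fun j => congrFun heq j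
  · intro w hw
    rw [Fintype.mem_piFinset] at hw
    obtain ⟨x, ⟨hx1, hx2⟩, -⟩ := key_unique n (2 ^ (∑ i : Fin n, w i)) (Cfun n w)
      (two_pow_not_dvd _) (Cfun_not_dvd n w)
    refine ⟨Fin.cons x w, ?_, ?_⟩
    · simp only [Finset.mem_filter, Fintype.mem_piFinset]
      constructor
      · intro j
        refine Fin.cases ?_ ?_ j
        · rw [Fin.cons_zero]; exact hx1
        · intro i; rw [Fin.cons_succ]; exact hw i
      · rw [hPiff]
        simp only [Fin.cons_zero, Fin.cons_succ]
        exact hx2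
    · funext i; exact Fin.cons_succ (α := fun _ => ℕ) x w i
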